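/- Every rooted tree can be written as a finite ℚ-linear combination of elements of the form N_{t_n}(⋯ N_{t_1}(•)⋯), where the t_i are rooted trees; hence the repeated application of generalized natural growth operators to the single-vertex tree generates the Hopf algebra of rooted trees. -/

import Mathlib

open TensorProduct

noncomputable section

/-- The Hopf algebra of rooted trees as a commutative algebra: the free commutative
`ℚ`-algebra on rooted trees, i.e. the monoid algebra of the commutative monoid of
forests (multisets of trees). -/
abbrev Hrt (T : Type) : Type := AddMonoidAlgebra ℚ (Multiset T)

/-- The basis element of `Hrt T` corresponding to a forest `F`. -/
def frt {T : Type} (F : Multiset T) : Hrt T := AddMonoidAlgebra.single F 1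

/-- The basis element of `Hrt T` corresponding to a single rooted tree `t`. -/
def tre {T : Type} (t : T) : Hrt T := frt {t}


/-- **Generalized natural growth generates the Hopf algebra of rooted trees.**
`T` is the type of rooted trees (with grafting bijection `B = B₊` and induction
principle).  For each tree `t`, `Ng t` is the generalized natural growth operator
`N_t` on `Hrt T`: on a tree `s = B₊(F)` it is the sum over vertices of `s` of the tree
obtained by attaching a copy of `t` there, i.e.
`N_t(B₊ F) = B₊(t ::ₘ F) + Σ_{s' ∈ F} B₊((F - s') + N_t(s'))`, and it is extended to
products of trees by the Leibniz rule.  Then every rooted tree is a finite `ℚ`-linear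
combination of elements `N_{t_n}(⋯ N_{t_1}(•)⋯)` (where `• = B₊(∅)` is the
single-vertex tree); hence these elements generate `Hrt T` as a `ℚ`-algebra. -/
theorem naturalGrowth_generates
    (T : Type) [DecidableEq T] (B : Multiset T → T) (hB : Function.Bijective B)
    (hind : ∀ P : T → Prop,
      (∀ F : Multiset T, (∀ s ∈ F, P s) → P (B F)) → ∀ t, P t)
    (Bp : Hrt T →ₗ[ℚ] Hrt T) (hBp : ∀ F : Multiset T, Bp (frt F) = tre (B F))
    (Ng : T → Hrt T →ₗ[ℚ] Hrt T)
    (hNder : ∀ (t : T) (a b : Hrt T), Ng t (a * b) = Ng t a * b + a * Ng t b)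
    (hNtree : ∀ (t : T) (F : Multiset T),
      Ng t (tre (B F)) = tre (B (t ::ₘ F))
        + (F.map (fun s => Bp (frt (F.erase s) * Ng t (tre s)))).sum) :
    (∀ t : T, tre t ∈ Submodule.span ℚ
        {x : Hrt T | ∃ L : List T, x = L.foldl (fun a u => Ng u a) (tre (B 0))}) ∧
      Algebra.adjoin ℚ
        {x : Hrt T | ∃ L : List T, x = L.foldl (fun a u => Ng u a) (tre (B 0))} = ⊤ := by

  classical
  set S : Set (Hrt T) :=
    {x : Hrt T | ∃ L : List T, x = L.foldl (fun a u => Ng u a) (tre (B 0))} with hS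
  set M : Submodule ℚ (Hrt T) := Submodule.span ℚ S with hM
  -- Ng t preserves S and hence M
  have hNgS : ∀ t : T, ∀ x ∈ S, Ng t x ∈ S := by
    rintro t x ⟨L, rfl⟩
    exact ⟨L ++ [t], by rw [List.foldl_append]; rfl⟩
  have hNgM : ∀ t : T, ∀ x ∈ M, Ng t x ∈ M := by
    intro t x hx
    have hmap : Submodule.map (Ng t) M ≤ M := by
      rw [hM, Submodule.map_span]
      refine Submodule.span_mono ?_
      rintro _ ⟨y, hy, rfl⟩
      exact hNgS t y hy
    exact hmap ⟨x, hx, rfl⟩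
  -- Bp maps everything into the span of trees
  have hBpRange : ∀ x : Hrt T,
      Bp x ∈ Submodule.span ℚ (Set.range (tre : T → Hrt T)) := by
    intro x
    induction x using AddMonoidAlgebra.induction_linear with
    | zero => simp
    | add f g hf hg => rw [map_add]; exact add_mem hf hg
    | single a b =>
      have h1 : (AddMonoidAlgebra.single a b : Hrt T) = b • frt a := by
        simp [frt, AddMonoidAlgebra.smul_single']
      rw [h1, map_smul, hBp]
      exact Submodule.smul_mem _ _ (Submodule.subset_span ⟨B a, rfl⟩)
  have hNgTre : ∀ (t s : T),
      Ng t (tre s) ∈ Submodule.span ℚ (Set.range (tre : T → Hrt T)) := by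
    intro t s
    obtain ⟨F, rfl⟩ := hB.2 s
    rw [hNtree]
    refine add_mem (Submodule.subset_span ⟨_, rfl⟩) (multiset_sum_mem _ ?_)
    intro x hx
    obtain ⟨u, _, rfl⟩ := Multiset.mem_map.mp hx
    exact hBpRange _
  -- key lemma: every tree is in M, by induction on the number of root branches
  have key : ∀ n : ℕ, ∀ F : Multiset T, Multiset.card F ≤ n → tre (B F) ∈ M := by
    intro n
    induction n with
    | zero =>
      intro F hF
      obtain rfl := Multiset.card_eq_zero.mp (Nat.le_zero.mp hF)
      exact Submodule.subset_span ⟨[], rfl⟩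
    | succ n ih =>
      intro F hF
      rcases Multiset.empty_or_exists_mem F with h0 | ⟨t, ht⟩
      · subst h0
        exact Submodule.subset_span ⟨[], rfl⟩
      · obtain ⟨F', rfl⟩ := Multiset.exists_cons_of_mem ht
        have hF' : Multiset.card F' ≤ n := by
          simpa using Nat.succ_le_succ_iff.mp (by simpa using hF)
        have h1 : Ng t (tre (B F')) ∈ M := hNgM t _ (ih F' hF')
        have h2 : ((F'.map (fun s => Bp (frt (F'.erase s) * Ng t (tre s)))).sum) ∈ M := by
          refine multiset_sum_mem _ ?_
          intro x hx
          obtain ⟨s, hs, rfl⟩ := Multiset.mem_map.mp hx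
          have hcard : Multiset.card (F'.erase s) + 1 ≤ n := by
            have hpos : 0 < Multiset.card F' := Multiset.card_pos_iff_exists_mem.mpr ⟨s, hs⟩
            rw [Multiset.card_erase_of_mem hs, Nat.pred_eq_sub_one]
            omega
          have hcard' : Multiset.card (F'.erase s) + 1 ≤ n := hcard
          refine Submodule.span_induction
            (p := fun y _ => Bp (frt (F'.erase s) * y) ∈ M) ?_ ?_ ?_ ?_ (hNgTre t s)
          · rintro _ ⟨u, rfl⟩
            have hmul : frt (F'.erase s) * tre u = frt (u ::ₘ F'.erase s) := by
              simp only [frt, tre, AddMonoidAlgebra.single_mul_single, mul_one]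
              congr 1
              rw [add_comm, Multiset.singleton_add]
            rw [hmul, hBp]
            refine ih _ ?_
            simpa using hcard
          · simp
          · intro a b _ _ ha hb
            rw [mul_add, map_add]
            exact add_mem ha hb
          · intro c a _ ha
            rw [mul_smul_comm, map_smul]
            exact Submodule.smul_mem _ _ ha
        have heq : tre (B (t ::ₘ F'))
            = Ng t (tre (B F'))
              - (F'.map (fun s => Bp (frt (F'.erase s) * Ng t (tre s)))).sum :=
          eq_sub_of_add_eq (hNtree t F').symm
        rw [heq]
        exact sub_mem h1 h2
  have hallM : ∀ t : T, tre t ∈ M := by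
    intro t
    obtain ⟨F, rfl⟩ := hB.2 t
    exact key (Multiset.card F) F le_rfl
  refine ⟨hallM, ?_⟩
  -- the algebra part
  have hMle : M ≤ Subalgebra.toSubmodule (Algebra.adjoin ℚ S) :=
    Submodule.span_le.mpr (fun x hx => Algebra.subset_adjoin hx)
  have htreA : ∀ t : T, tre t ∈ Algebra.adjoin ℚ S := fun t => hMle (hallM t)
  have hfrtA : ∀ F : Multiset T, frt F ∈ Algebra.adjoin ℚ S := by
    intro F
    induction F using Multiset.induction with
    | empty =>
      have : (frt (0 : Multiset T)) = (1 : Hrt T) := by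
        simp [frt, AddMonoidAlgebra.one_def]
      rw [this]
      exact one_mem _
    | cons t F ihF =>
      have : frt (t ::ₘ F) = tre t * frt F := by
        simp [frt, tre, AddMonoidAlgebra.single_mul_single]
      rw [this]
      exact mul_mem (htreA t) ihF
  rw [eq_top_iff]
  rintro x -
  induction x using AddMonoidAlgebra.induction_linear with
  | zero => exact zero_mem _
  | add f g hf hg => exact add_mem hf hg
  | single a b =>
    have h1 : (AddMonoidAlgebra.single a b : Hrt T) = b • frt a := by
      simp [frt, AddMonoidAlgebra.smul_single']
    rw [h1]
    exact Subalgebra.smul_mem _ (hfrtA a) b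


end
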